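/- For every integer m ≥ 1, s_p(m) - s_p(m-1) ≤ 1 when 0 ≤ p ≤ 1, where s_p is the weighted binary digit sum. -/

import Mathlib

open Finset

/-- Weighted binary digit sum: `s_p(n) = ∑_j 2^{pj} ε_j(n)`. -/
noncomputable def sWeight (p : ℝ) (n : ℕ) : ℝ :=
  ∑ j ∈ Finset.range n, if n.testBit j then (2:ℝ) ^ (p * (j:ℝ)) else 0

/-- `S_p(n) = ∑_{m=0}^{n-1} s_p(m)`. -/
noncomputable def SWeight (p : ℝ) (n : ℕ) : ℝ :=
  ∑ m ∈ Finset.range n, sWeight p m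

lemma sWeight_extend (p : ℝ) {n N : ℕ} (h : n ≤ N) :
    sWeight p n = ∑ j ∈ Finset.range N, if n.testBit j then (2:ℝ) ^ (p * (j:ℝ)) else 0 := by
  unfold sWeight
  refine Finset.sum_subset (Finset.range_subset_range.2 h) ?_
  intro j hj hj'
  simp only [Finset.mem_range, not_lt] at hj'
  have : n.testBit j = false := Nat.testBit_lt_two_pow (lt_of_le_of_lt hj' (Nat.lt_two_pow_self (n := j)))
  simp [this]

lemma sWeight_rec (p : ℝ) (n : ℕ) :
    sWeight p n = (n % 2 : ℕ) + 2 ^ p * sWeight p (n / 2) := by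
  rw [sWeight_extend p (Nat.le_succ n), Finset.sum_range_succ']
  have h0 : (if n.testBit 0 then (2:ℝ) ^ (p * ((0:ℕ):ℝ)) else 0) = (n % 2 : ℕ) := by
    rcases Nat.mod_two_eq_zero_or_one n with h | h
    · have : n.testBit 0 = false := by simp [Nat.testBit_zero, h]
      simp [this, h]
    · have : n.testBit 0 = true := by simp [Nat.testBit_zero, h]
      simp [this, h]
  rw [h0, sWeight_extend p (Nat.div_le_self n 2), Finset.mul_sum]
  rw [add_comm]
  congr 1
  refine Finset.sum_congr rfl fun j _ => ?_
  have ht : n.testBit (j + 1) = (n / 2).testBit j := by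
    simpa using Nat.testBit_succ n j
  rw [ht]
  by_cases h : (n / 2).testBit j
  · simp only [h, if_true]
    rw [← Real.rpow_add (by norm_num : (0:ℝ) < 2)]
    congr 1
    push_cast
    ring
  · simp [h]

theorem sWeight_succ_diff_le_one (p : ℝ) (hp0 : 0 ≤ p) (hp1 : p ≤ 1)
    (m : ℕ) (hm : 1 ≤ m) :
    sWeight p m - sWeight p (m - 1) ≤ 1 := by
  induction m using Nat.strong_induction_on with
  | _ m ih =>
    have h2p_nonneg : (0:ℝ) ≤ 2 ^ p := (Real.rpow_pos_of_pos two_pos p).le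
    have h2p_le : (2:ℝ) ^ p ≤ 2 := by
      calc (2:ℝ) ^ p ≤ 2 ^ (1:ℝ) := Real.rpow_le_rpow_of_exponent_le one_le_two hp1
      _ = 2 := Real.rpow_one 2
    rcases Nat.even_or_odd m with ⟨q, hq⟩ | ⟨q, hq⟩
    · -- m = 2q, q ≥ 1
      have hq1 : 1 ≤ q := by omega
      have e1 : m % 2 = 0 := by omega
      have e2 : m / 2 = q := by omega
      have e3 : (m - 1) % 2 = 1 := by omega
      have e4 : (m - 1) / 2 = q - 1 := by omega
      rw [sWeight_rec p m, sWeight_rec p (m - 1), e1, e2, e3, e4]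
      have hih : sWeight p q - sWeight p (q - 1) ≤ 1 := ih q (by omega) hq1
      have : 2 ^ p * sWeight p q - 2 ^ p * sWeight p (q - 1) ≤ 2 ^ p := by
        rw [← mul_sub]
        calc 2 ^ p * (sWeight p q - sWeight p (q - 1)) ≤ 2 ^ p * 1 :=
          mul_le_mul_of_nonneg_left hih h2p_nonneg
        _ = 2 ^ p := mul_one _
      push_cast
      linarith
    · -- m = 2q + 1
      have e1 : m % 2 = 1 := by omega
      have e2 : m / 2 = q := by omega
      have e3 : (m - 1) % 2 = 0 := by omega
      have e4 : (m - 1) / 2 = q := by omega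
      rw [sWeight_rec p m, sWeight_rec p (m - 1), e1, e2, e3, e4]
      push_cast
      linarith
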